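/- For every γ ∈ ℝ and every k ∈ ℕ, (1/(π·k!)) · ∬_{ℝ²} ((x₁ + γ)² + x₂²)^k · e^{−x₁² − x₂²} dx₁ dx₂ = L_k(−γ²). -/

import Mathlib

open MeasureTheory


open Finset Nat

/-- central binomial convolution partial sums -/
private def Scb (K : ℕ) : ℕ := ∑ l ∈ range (K + 1), centralBinom l * centralBinom (K - l)

private lemma twice_weighted (K : ℕ) :
    2 * ∑ l ∈ range (K + 1), l * (centralBinom l * centralBinom (K - l)) = K * Scb K := by
  have h := Finset.sum_range_reflect
    (fun l => l * (centralBinom l * centralBinom (K - l))) (K + 1)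
  -- h : ∑ j in range (K+1), f (K - j) = ∑ l in range (K+1), f l  (check direction)
  rw [two_mul]
  nth_rewrite 2 [← h]
  rw [← Finset.sum_add_distrib, Scb, Finset.mul_sum]
  apply Finset.sum_congr rfl
  intro l hl
  have hlK : l ≤ K := by simpa [Nat.lt_succ_iff] using hl
  have h1 : K + 1 - 1 - l = K - l := by omega
  rw [h1]
  have h2 : K - (K - l) = l := by omega
  rw [h2]
  have : centralBinom (K - l) * centralBinom l = centralBinom l * centralBinom (K - l) :=
    mul_comm _ _
  rw [this]
  have : l * (centralBinom l * centralBinom (K - l)) + (K - l) * (centralBinom l * centralBinom (K - l)) = (l + (K - l)) * (centralBinom l * centralBinom (K - l)) := by ring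
  rw [this]
  congr 1
  omega

private lemma Scb_succ (K : ℕ) : Scb (K + 1) = 4 * Scb K := by
  have hw := twice_weighted (K + 1)
  have hshift : ∑ l ∈ range (K + 1 + 1), l * (centralBinom l * centralBinom (K + 1 - l))
      = ∑ j ∈ range (K + 1), (j + 1) * (centralBinom (j + 1) * centralBinom (K - j)) := by
    rw [Finset.sum_range_succ' (fun l => l * (centralBinom l * centralBinom (K + 1 - l))) (K + 1)]
    simp
  have hrec : ∀ j, (j + 1) * (centralBinom (j + 1) * centralBinom (K - j))
      = 2 * (2 * j + 1) * (centralBinom j * centralBinom (K - j)) := by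
    intro j
    rw [← mul_assoc, Nat.succ_mul_centralBinom_succ, mul_assoc]
  have key : 2 * ∑ l ∈ range (K + 1 + 1), l * (centralBinom l * centralBinom (K + 1 - l))
      = 4 * (K + 1) * Scb K := by
    rw [hshift]
    have : ∑ j ∈ range (K + 1), (j + 1) * (centralBinom (j + 1) * centralBinom (K - j))
        = 4 * (∑ j ∈ range (K + 1), j * (centralBinom j * centralBinom (K - j))) + 2 * Scb K := by
      rw [Finset.mul_sum, Scb, Finset.mul_sum, ← Finset.sum_add_distrib]
      apply Finset.sum_congr rfl
      intro j _
      rw [hrec j]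
      ring
    rw [this, Nat.mul_add, ← mul_assoc 2 4, mul_comm 2 4, mul_assoc 4 2, twice_weighted K]
    ring
  rw [hw] at key
  have h2 : (K + 1) * Scb (K + 1) = (K + 1) * (4 * Scb K) := by
    rw [key]; ring
  exact Nat.eq_of_mul_eq_mul_left (Nat.succ_pos K) h2

private lemma Scb_eq (K : ℕ) : Scb K = 4 ^ K := by
  induction K with
  | zero => simp [Scb, centralBinom]
  | succ n ih => rw [Scb_succ, ih]; ring

private def Acb (K m : ℕ) : ℕ :=
  ∑ l ∈ range (K + 1), centralBinom (l + m) * centralBinom (K - l) * (l + m).descFactorial m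

private lemma Acb_zero_right (K : ℕ) : Acb K 0 = Scb K := by
  unfold Acb Scb
  simp

private lemma Acb_rec (K m : ℕ) :
    Acb (K + 1) (m + 1) = 4 * Acb K (m + 1) + (4 * m + 2) * Acb (K + 1) m := by
  have hterm : ∀ l, centralBinom (l + (m + 1)) * centralBinom (K + 1 - l) *
        (l + (m + 1)).descFactorial (m + 1)
      = 4 * (l * (centralBinom (l + m) * centralBinom (K + 1 - l) * (l + m).descFactorial m))
        + (4 * m + 2) * (centralBinom (l + m) * centralBinom (K + 1 - l) *
            (l + m).descFactorial m) := by
    intro l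
    have h1 : l + (m + 1) = (l + m) + 1 := by omega
    rw [h1, Nat.succ_descFactorial_succ]
    have h2 : centralBinom (l + m + 1) * centralBinom (K + 1 - l) *
          ((l + m + 1) * (l + m).descFactorial m)
        = ((l + m + 1) * centralBinom (l + m + 1)) * centralBinom (K + 1 - l) *
            (l + m).descFactorial m := by ring
    rw [h2, Nat.succ_mul_centralBinom_succ]
    ring
  have hsum : Acb (K + 1) (m + 1)
      = 4 * (∑ l ∈ range (K + 1 + 1),
          l * (centralBinom (l + m) * centralBinom (K + 1 - l) * (l + m).descFactorial m))
        + (4 * m + 2) * Acb (K + 1) m := by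
    unfold Acb
    rw [Finset.mul_sum, Finset.mul_sum, ← Finset.sum_add_distrib]
    exact Finset.sum_congr rfl fun l _ => hterm l
  have hshift : (∑ l ∈ range (K + 1 + 1),
        l * (centralBinom (l + m) * centralBinom (K + 1 - l) * (l + m).descFactorial m))
      = Acb K (m + 1) := by
    rw [Finset.sum_range_succ' (fun l =>
      l * (centralBinom (l + m) * centralBinom (K + 1 - l) * (l + m).descFactorial m)) (K + 1)]
    simp only [Nat.zero_mul, add_zero]
    unfold Acb
    apply Finset.sum_congr rfl
    intro j _
    have h1 : j + 1 + m = j + (m + 1) := by omega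
    have h2 : K + 1 - (j + 1) = K - j := by omega
    rw [h1, h2]
    have h3 : (j + (m + 1)).descFactorial (m + 1)
        = (j + 1) * (j + (m + 1)).descFactorial m := by
      rw [Nat.descFactorial_succ]
      have : j + (m + 1) - m = j + 1 := by omega
      rw [this]
    rw [h3]
    ring
  rw [hsum, hshift]

private lemma cb_spec (n : ℕ) : centralBinom n * (n ! * n !) = (2 * n)! := by
  have h := Nat.choose_mul_factorial_mul_factorial (Nat.le_mul_of_pos_left n (by norm_num) : n ≤ 2 * n)
  rw [Nat.centralBinom_eq_two_mul_choose]
  have h2 : 2 * n - n = n := by omega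
  rw [h2] at h
  rw [← h]; ring

private lemma Acb_eq (m K : ℕ) :
    Acb K m * (m ! * m ! * K !) = 4 ^ K * (2 * m)! * (K + m)! := by
  induction m generalizing K with
  | zero =>
    rw [Acb_zero_right, Scb_eq]
    simp
  | succ m ihm =>
    induction K with
    | zero =>
      have h0 : Acb 0 (m + 1) = centralBinom (m + 1) * (m + 1)! := by
        unfold Acb
        rw [Finset.sum_range_one]
        simp only [Nat.zero_add, Nat.sub_self, Nat.centralBinom_zero, mul_one,
          Nat.descFactorial_self, one_mul, Nat.zero_sub]
      rw [h0]
      have := cb_spec (m + 1)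
      simp only [Nat.factorial_zero, pow_zero, zero_add]
      calc centralBinom (m + 1) * (m + 1)! * ((m + 1)! * (m + 1)! * 1)
          = (centralBinom (m + 1) * ((m + 1)! * (m + 1)!)) * (m + 1)! := by ring
        _ = 1 * (2 * (m + 1))! * (m + 1)! := by rw [this]; ring
    | succ K ihK =>
      have e1 : (K + 1)! = (K + 1) * K ! := Nat.factorial_succ K
      have e2 : (2 * (m + 1))! = (2 * m + 1 + 1) * ((2 * m + 1) * (2 * m)!) := by
        rw [show 2 * (m + 1) = 2 * m + 1 + 1 by omega, Nat.factorial_succ, Nat.factorial_succ]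
      have e3 : (m + 1)! = (m + 1) * m ! := Nat.factorial_succ m
      have e4 : (K + 1 + (m + 1))! = (K + m + 1 + 1) * ((K + m + 1) * (K + m)!) := by
        rw [show K + 1 + (m + 1) = K + m + 1 + 1 by omega, Nat.factorial_succ,
          Nat.factorial_succ]
      have e5 : (K + 1 + m)! = (K + m + 1) * (K + m)! := by
        rw [show K + 1 + m = K + m + 1 by omega, Nat.factorial_succ]
      have e6 : (K + (m + 1))! = (K + m + 1) * (K + m)! := by
        rw [show K + (m + 1) = K + m + 1 by omega, Nat.factorial_succ]
      have ihm' := ihm (K + 1)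
      rw [e3, e2, e6] at ihK
      rw [e1, e5, pow_succ] at ihm'
      rw [Acb_rec, e3, e1, e2, e4, pow_succ]
      zify at ihK ihm' ⊢
      linear_combination (4 * ((K : ℤ) + 1)) * ihK + ((4 * (m : ℤ) + 2) * ((m : ℤ) + 1) ^ 2) * ihm'

set_option maxRecDepth 4000
open Real MeasureTheory Filter Finset

private lemma momInt (n : ℕ) : Integrable (fun x : ℝ => x ^ n * Real.exp (-x ^ 2)) := by
  have h := integrable_rpow_mul_exp_neg_mul_sq (b := 1) one_pos
    (s := (n : ℝ)) (lt_of_lt_of_le (by norm_num) (Nat.cast_nonneg n))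
  simpa [Real.rpow_natCast] using h

private lemma momTendTop (n : ℕ) :
    Tendsto (fun x : ℝ => x ^ n * Real.exp (-x ^ 2)) atTop (nhds 0) := by
  have hexp : Tendsto (fun x : ℝ => Real.exp (-(1/2) * x)) atTop (nhds 0) := by
    have h1 : Tendsto (fun x : ℝ => (1/2 : ℝ) * x) atTop atTop :=
      Tendsto.const_mul_atTop (by norm_num) tendsto_id
    have h2 := tendsto_exp_neg_atTop_nhds_zero.comp h1
    refine h2.congr fun x => ?_
    simp [Function.comp_def, neg_mul]
  have h := (rpow_mul_exp_neg_mul_sq_isLittleO_exp_neg (b := 1) one_pos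
    (n : ℝ)).isBigO.trans_tendsto hexp
  simpa [Real.rpow_natCast] using h

private lemma momTendBot (n : ℕ) :
    Tendsto (fun x : ℝ => x ^ n * Real.exp (-x ^ 2)) atBot (nhds 0) := by
  have h := ((momTendTop n).const_mul ((-1 : ℝ) ^ n)).comp tendsto_neg_atBot_atTop
  have h0 : ((-1 : ℝ) ^ n * 0) = 0 := by ring
  rw [h0] at h
  refine h.congr fun x => ?_
  show (-1 : ℝ) ^ n * ((-x) ^ n * Real.exp (-(-x) ^ 2)) = x ^ n * Real.exp (-x ^ 2)
  rw [neg_sq, ← mul_assoc, ← mul_pow, neg_mul_neg, one_mul]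

private lemma momRec (n : ℕ) :
    ∫ x : ℝ, x ^ (n + 2) * Real.exp (-x ^ 2)
      = ((n : ℝ) + 1) / 2 * ∫ x : ℝ, x ^ n * Real.exp (-x ^ 2) := by
  set f : ℝ → ℝ := fun x => x ^ (n + 1) * Real.exp (-x ^ 2) with hf
  set f' : ℝ → ℝ := fun x =>
    ((n : ℝ) + 1) * (x ^ n * Real.exp (-x ^ 2)) - 2 * (x ^ (n + 2) * Real.exp (-x ^ 2)) with hf'
  have hderiv : ∀ x, HasDerivAt f (f' x) x := by
    intro x
    have h1 : HasDerivAt (fun x : ℝ => x ^ (n + 1)) (((n : ℝ) + 1) * x ^ n) x := by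
      simpa using hasDerivAt_pow (n + 1) x
    have h2 : HasDerivAt (fun x : ℝ => Real.exp (-x ^ 2)) (Real.exp (-x ^ 2) * (-(2 * x))) x := by
      have := ((hasDerivAt_pow 2 x).neg).exp
      simpa using this
    have : HasDerivAt f (((n : ℝ) + 1) * x ^ n * Real.exp (-x ^ 2) + x ^ (n + 1) * (Real.exp (-x ^ 2) * -(2 * x))) x := h1.mul h2
    convert this using 1
    simp only [hf']
    ring
  have hint : Integrable f' := (((momInt n).const_mul _).sub ((momInt (n + 2)).const_mul 2))
  have hzero : ∫ x, f' x = 0 - 0 :=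
    integral_of_hasDerivAt_of_tendsto hderiv hint (momTendBot (n + 1)) (momTendTop (n + 1))
  have hsub : ∫ x, f' x
      = ((n : ℝ) + 1) * (∫ x, x ^ n * Real.exp (-x ^ 2))
        - 2 * ∫ x, x ^ (n + 2) * Real.exp (-x ^ 2) := by
    rw [hf', integral_sub ((momInt n).const_mul _) ((momInt (n + 2)).const_mul 2),
      integral_const_mul, integral_const_mul]
  rw [hsub] at hzero
  have h2 : (2 : ℝ) ≠ 0 := two_ne_zero
  field_simp
  linarith

private lemma momZero : ∫ x : ℝ, x ^ 0 * Real.exp (-x ^ 2) = Real.sqrt Real.pi := by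
  have := integral_gaussian 1
  simpa using this

private lemma momOne : ∫ x : ℝ, x ^ 1 * Real.exp (-x ^ 2) = 0 := by
  set f : ℝ → ℝ := fun x => -(1 / 2) * Real.exp (-x ^ 2) with hf
  have hderiv : ∀ x : ℝ, HasDerivAt f (x ^ 1 * Real.exp (-x ^ 2)) x := by
    intro x
    have h2 : HasDerivAt (fun x : ℝ => Real.exp (-x ^ 2)) (Real.exp (-x ^ 2) * (-(2 * x))) x := by
      have := ((hasDerivAt_pow 2 x).neg).exp
      simpa using this
    have : HasDerivAt f (-(1 / 2) * (Real.exp (-x ^ 2) * -(2 * x))) x := h2.const_mul (-(1 / 2) : ℝ)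
    convert this using 1
    ring
  have hzero : ∫ x, x ^ 1 * Real.exp (-x ^ 2) = 0 - 0 := by
    refine integral_of_hasDerivAt_of_tendsto hderiv (momInt 1) ?_ ?_
    · have := (momTendBot 0).const_mul (-(1/2) : ℝ)
      simpa [hf] using this
    · have := (momTendTop 0).const_mul (-(1/2) : ℝ)
      simpa [hf] using this
  simpa using hzero

/-- normalized even Gaussian moments -/
private noncomputable def aR (l : ℕ) : ℝ := (2 * l).factorial / (4 ^ l * l.factorial)

private lemma momEven (l : ℕ) :
    ∫ x : ℝ, x ^ (2 * l) * Real.exp (-x ^ 2) = Real.sqrt Real.pi * aR l := by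
  induction l with
  | zero => simpa [aR] using momZero
  | succ l ih =>
    have h : 2 * (l + 1) = 2 * l + 2 := by ring
    rw [h, momRec (2 * l), ih, aR, aR]
    have h4 : (4 : ℝ) ^ (l + 1) = 4 * 4 ^ l := by ring
    have hfac : ((2 * (l + 1)).factorial : ℝ)
        = (2 * l + 2) * ((2 * l + 1) * (2 * l).factorial) := by
      rw [show 2 * (l + 1) = 2 * l + 1 + 1 by ring]
      push_cast [Nat.factorial_succ]
      ring
    have hfac2 : ((l + 1).factorial : ℝ) = (l + 1) * l.factorial := by
      push_cast [Nat.factorial_succ]; ring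
    rw [hfac, hfac2, h4]
    have hl : (l.factorial : ℝ) ≠ 0 := Nat.cast_ne_zero.mpr l.factorial_ne_zero
    have h4l : (4 : ℝ) ^ l ≠ 0 := by positivity
    push_cast
    field_simp
    ring

private lemma momOdd (m : ℕ) : ∫ x : ℝ, x ^ (2 * m + 1) * Real.exp (-x ^ 2) = 0 := by
  induction m with
  | zero => simpa using momOne
  | succ m ih =>
    have h : 2 * (m + 1) + 1 = (2 * m + 1) + 2 := by ring
    rw [h, momRec (2 * m + 1), ih, mul_zero]

private lemma key_m (m K : ℕ) :
    ∑ l ∈ range (K + 1),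
        ((m + K).choose (m + l) : ℝ) * ((2 * (m + l)).choose (2 * m) : ℝ) * aR l * aR (K - l)
      = ((m + K).factorial : ℝ) * ((m + K).choose m : ℝ) / (m.factorial : ℝ) := by
  have hsum : ∑ l ∈ range (K + 1),
        ((m + K).choose (m + l) : ℝ) * ((2 * (m + l)).choose (2 * m) : ℝ) * aR l * aR (K - l)
      = ((m + K).factorial : ℝ) / ((2 * m).factorial * 4 ^ K) * (Acb K m : ℝ) := by
    unfold Acb
    push_cast
    rw [Finset.mul_sum]
    apply Finset.sum_congr rfl
    intro l hl
    have hlK : l ≤ K := by simpa [Nat.lt_succ_iff] using hl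
    -- cast facts
    have c1 : ((m + K).choose (m + l) : ℝ)
        = ((m + K).factorial : ℝ) / ((m + l).factorial * (K - l).factorial) := by
      rw [Nat.cast_choose ℝ (by omega : m + l ≤ m + K),
        show m + K - (m + l) = K - l by omega]
    have c2 : (((2 * (m + l)).choose (2 * m)) : ℝ)
        = ((2 * (m + l)).factorial : ℝ) / ((2 * m).factorial * (2 * l).factorial) := by
      rw [Nat.cast_choose ℝ (by omega : 2 * m ≤ 2 * (m + l)),
        show 2 * (m + l) - 2 * m = 2 * l by omega]
    have c3 : ((l + m).centralBinom : ℝ)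
        = ((2 * (m + l)).factorial : ℝ) / ((l + m).factorial * (l + m).factorial) := by
      rw [Nat.centralBinom, Nat.cast_choose ℝ (by omega : l + m ≤ 2 * (l + m))]
      rw [show 2 * (l + m) - (l + m) = l + m by omega, show 2 * (l + m) = 2 * (m + l) by omega]
    have c4 : ((K - l).centralBinom : ℝ)
        = ((2 * (K - l)).factorial : ℝ) / ((K - l).factorial * (K - l).factorial) := by
      rw [Nat.centralBinom, Nat.cast_choose ℝ (by omega : K - l ≤ 2 * (K - l))]
      rw [show 2 * (K - l) - (K - l) = K - l by omega]
    have c5 : (((l + m).descFactorial m) : ℝ) = ((l + m).factorial : ℝ) / (l.factorial : ℝ) := by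
      have h := Nat.factorial_mul_descFactorial (by omega : m ≤ l + m)
      rw [show l + m - m = l by omega] at h
      have : ((l.factorial : ℝ)) * ((l + m).descFactorial m : ℝ) = ((l + m).factorial : ℝ) := by
        exact_mod_cast congrArg (Nat.cast (R := ℝ)) h
      field_simp
      linarith [this]
    have c6 : (4 : ℝ) ^ K = 4 ^ l * 4 ^ (K - l) := by
      rw [← pow_add]
      congr 1
      omega
    rw [c1, c2, c3, c4, c5, c6]
    unfold aR
    have hml : ((m + l).factorial : ℝ) ≠ 0 := Nat.cast_ne_zero.mpr (Nat.factorial_ne_zero _)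
    have hlm : ((l + m).factorial : ℝ) ≠ 0 := Nat.cast_ne_zero.mpr (Nat.factorial_ne_zero _)
    have hKl : ((K - l).factorial : ℝ) ≠ 0 := Nat.cast_ne_zero.mpr (Nat.factorial_ne_zero _)
    have h2m : (((2 * m).factorial : ℝ)) ≠ 0 := Nat.cast_ne_zero.mpr (Nat.factorial_ne_zero _)
    have h2l : (((2 * l).factorial : ℝ)) ≠ 0 := Nat.cast_ne_zero.mpr (Nat.factorial_ne_zero _)
    have hl4 : (4 : ℝ) ^ l ≠ 0 := by positivity
    have hK4 : (4 : ℝ) ^ (K - l) ≠ 0 := by positivity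
    have hlf : ((l.factorial : ℝ)) ≠ 0 := Nat.cast_ne_zero.mpr (Nat.factorial_ne_zero _)
    have hml2 : ((m + l).factorial : ℝ) = ((l + m).factorial : ℝ) := by
      rw [show m + l = l + m by omega]
    rw [hml2]
    field_simp
  rw [hsum]
  have hA := Acb_eq m K
  have hAr : (Acb K m : ℝ) * ((m.factorial : ℝ) * m.factorial * K.factorial)
      = 4 ^ K * ((2 * m).factorial : ℝ) * ((K + m).factorial : ℝ) := by
    exact_mod_cast congrArg (Nat.cast (R := ℝ)) hA
  have hc : ((m + K).choose m : ℝ)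
      = ((m + K).factorial : ℝ) / ((m.factorial : ℝ) * (K.factorial : ℝ)) := by
    rw [Nat.cast_choose ℝ (by omega : m ≤ m + K), show m + K - m = K by omega]
  rw [hc]
  have hKm : ((K + m).factorial : ℝ) = ((m + K).factorial : ℝ) := by
    rw [show K + m = m + K by omega]
  rw [hKm] at hAr
  have h2m : (((2 * m).factorial : ℝ)) ≠ 0 := Nat.cast_ne_zero.mpr (Nat.factorial_ne_zero _)
  have hmf : ((m.factorial : ℝ)) ≠ 0 := Nat.cast_ne_zero.mpr (Nat.factorial_ne_zero _)
  have hKf : ((K.factorial : ℝ)) ≠ 0 := Nat.cast_ne_zero.mpr (Nat.factorial_ne_zero _)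
  have h4K : (4 : ℝ) ^ K ≠ 0 := by positivity
  field_simp
  linear_combination hAr

private lemma comb_bridge (γ : ℝ) (k : ℕ) :
    ∑ j ∈ range (k + 1), ∑ l ∈ range (j + 1),
        (k.choose j : ℝ) * ((2 * j).choose (2 * l) : ℝ) * γ ^ (2 * j - 2 * l) *
          (aR l * aR (k - j))
      = (k.factorial : ℝ) * ∑ m ∈ range (k + 1),
          (1 / (m.factorial : ℝ)) * (k.choose m : ℝ) * γ ^ (2 * m) := by
  have step1 : ∀ j ∈ range (k + 1), ∑ l ∈ range (j + 1),
        (k.choose j : ℝ) * ((2 * j).choose (2 * l) : ℝ) * γ ^ (2 * j - 2 * l) *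
          (aR l * aR (k - j))
      = ∑ m ∈ range (k + 1),
          (k.choose j : ℝ) * ((2 * j).choose (2 * m) : ℝ) * γ ^ (2 * m) *
            (aR (j - m) * aR (k - j)) := by
    intro j hj
    have hjk : j ≤ k := by simpa [Nat.lt_succ_iff] using hj
    have hrefl := Finset.sum_range_reflect (fun l =>
      (k.choose j : ℝ) * ((2 * j).choose (2 * l) : ℝ) * γ ^ (2 * j - 2 * l) *
        (aR l * aR (k - j))) (j + 1)
    rw [← hrefl]
    have hs : ∀ m ∈ range (j + 1),
        (k.choose j : ℝ) * ((2 * j).choose (2 * (j + 1 - 1 - m)) : ℝ) *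
            γ ^ (2 * j - 2 * (j + 1 - 1 - m)) * (aR (j + 1 - 1 - m) * aR (k - j))
        = (k.choose j : ℝ) * ((2 * j).choose (2 * m) : ℝ) * γ ^ (2 * m) *
            (aR (j - m) * aR (k - j)) := by
      intro m hm
      have hmj : m ≤ j := by simpa [Nat.lt_succ_iff] using hm
      rw [show j + 1 - 1 - m = j - m by omega,
        show 2 * (j - m) = 2 * j - 2 * m by omega,
        show 2 * j - (2 * j - 2 * m) = 2 * m by omega,
        Nat.choose_symm (by omega : 2 * m ≤ 2 * j)]
    rw [Finset.sum_congr rfl hs]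
    exact Finset.sum_subset (Finset.range_subset_range.mpr (by omega)) (by
      intro m _ hm
      have : j < m := by simpa [Nat.lt_succ_iff] using hm
      rw [Nat.choose_eq_zero_of_lt (by omega : 2 * j < 2 * m)]
      simp)
  rw [Finset.sum_congr rfl step1, Finset.sum_comm, Finset.mul_sum]
  apply Finset.sum_congr rfl
  intro m hm
  have hmk : m ≤ k := by simpa [Nat.lt_succ_iff] using hm
  have step2 : ∑ j ∈ range (k + 1),
        (k.choose j : ℝ) * ((2 * j).choose (2 * m) : ℝ) * γ ^ (2 * m) *
          (aR (j - m) * aR (k - j))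
      = ∑ j ∈ Finset.Ico m (k + 1),
        (k.choose j : ℝ) * ((2 * j).choose (2 * m) : ℝ) * γ ^ (2 * m) *
          (aR (j - m) * aR (k - j)) := by
    rw [Finset.range_eq_Ico]
    refine (Finset.sum_subset (Finset.Ico_subset_Ico (Nat.zero_le m) le_rfl) ?_).symm
    intro j hj hj2
    simp only [Finset.mem_Ico] at hj hj2
    have : j < m := by omega
    rw [Nat.choose_eq_zero_of_lt (by omega : 2 * j < 2 * m)]
    simp
  rw [step2, Finset.sum_Ico_eq_sum_range, show k + 1 - m = (k - m) + 1 by omega]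
  have step3 : ∀ l ∈ range ((k - m) + 1),
      (k.choose (m + l) : ℝ) * ((2 * (m + l)).choose (2 * m) : ℝ) * γ ^ (2 * m) *
          (aR (m + l - m) * aR (k - (m + l)))
        = γ ^ (2 * m) * ((k.choose (m + l) : ℝ) * ((2 * (m + l)).choose (2 * m) : ℝ) *
            aR l * aR (k - m - l)) := by
    intro l hl
    rw [show m + l - m = l by omega, show k - (m + l) = k - m - l by omega]
    ring
  rw [Finset.sum_congr rfl step3, ← Finset.mul_sum]
  have hkey := key_m m (k - m)
  rw [show m + (k - m) = k by omega] at hkey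
  rw [hkey]
  have hmf : ((m.factorial : ℝ)) ≠ 0 := Nat.cast_ne_zero.mpr (Nat.factorial_ne_zero _)
  field_simp

private lemma sum_even (f : ℕ → ℝ) (hodd : ∀ m, f (2 * m + 1) = 0) (j : ℕ) :
    ∑ i ∈ range (2 * j + 1), f i = ∑ l ∈ range (j + 1), f (2 * l) := by
  induction j with
  | zero => simp
  | succ j ih =>
    rw [show 2 * (j + 1) + 1 = (2 * j + 1) + 1 + 1 by ring, Finset.sum_range_succ,
      Finset.sum_range_succ, ih, hodd j,
      show 2 * j + 1 + 1 = 2 * (j + 1) by ring,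
      Finset.sum_range_succ (fun l => f (2 * l)) (j + 1)]
    ring

private lemma integrand_expand (γ : ℝ) (k : ℕ) (x y : ℝ) :
    ((x + γ) ^ 2 + y ^ 2) ^ k * Real.exp (-x ^ 2 - y ^ 2)
      = ∑ j ∈ range (k + 1), ∑ i ∈ range (2 * j + 1),
          (k.choose j : ℝ) * ((2 * j).choose i : ℝ) * γ ^ (2 * j - i) *
            ((x ^ i * Real.exp (-x ^ 2)) * (y ^ (2 * (k - j)) * Real.exp (-y ^ 2))) := by
  have hexp : Real.exp (-x ^ 2 - y ^ 2) = Real.exp (-x ^ 2) * Real.exp (-y ^ 2) := by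
    rw [← Real.exp_add]
    ring_nf
  rw [hexp, add_pow, Finset.sum_mul]
  apply Finset.sum_congr rfl
  intro j hj
  rw [show ((x + γ) ^ 2) ^ j = (x + γ) ^ (2 * j) by rw [← pow_mul],
    show ((y : ℝ) ^ 2) ^ (k - j) = y ^ (2 * (k - j)) by rw [← pow_mul], add_pow]
  simp only [Finset.sum_mul]
  apply Finset.sum_congr rfl
  intro i hi
  ring

private lemma integral_eval (γ : ℝ) (k : ℕ) :
    (∫ p : ℝ × ℝ, ((p.1 + γ) ^ 2 + p.2 ^ 2) ^ k * Real.exp (-p.1 ^ 2 - p.2 ^ 2))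
      = ∑ j ∈ range (k + 1), ∑ i ∈ range (2 * j + 1),
          (k.choose j : ℝ) * ((2 * j).choose i : ℝ) * γ ^ (2 * j - i) *
            ((∫ x : ℝ, x ^ i * Real.exp (-x ^ 2)) *
              ∫ y : ℝ, y ^ (2 * (k - j)) * Real.exp (-y ^ 2)) := by
  have hint : ∀ (c : ℝ) (i n : ℕ), Integrable (fun p : ℝ × ℝ =>
      c * ((p.1 ^ i * Real.exp (-p.1 ^ 2)) * (p.2 ^ n * Real.exp (-p.2 ^ 2)))) := by
    intro c i n
    rw [MeasureTheory.Measure.volume_eq_prod]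
    exact ((momInt i).mul_prod (momInt n)).const_mul c
  have hrw : (fun p : ℝ × ℝ => ((p.1 + γ) ^ 2 + p.2 ^ 2) ^ k * Real.exp (-p.1 ^ 2 - p.2 ^ 2))
      = fun p : ℝ × ℝ => ∑ j ∈ range (k + 1), ∑ i ∈ range (2 * j + 1),
          (k.choose j : ℝ) * ((2 * j).choose i : ℝ) * γ ^ (2 * j - i) *
            ((p.1 ^ i * Real.exp (-p.1 ^ 2)) * (p.2 ^ (2 * (k - j)) * Real.exp (-p.2 ^ 2))) :=
    funext fun p => integrand_expand γ k p.1 p.2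
  rw [hrw, integral_finset_sum _ (fun j _ => integrable_finset_sum _ (fun i _ => hint _ _ _))]
  apply Finset.sum_congr rfl
  intro j _
  rw [integral_finset_sum _ (fun i _ => hint _ _ _)]
  apply Finset.sum_congr rfl
  intro i _
  rw [integral_const_mul, MeasureTheory.Measure.volume_eq_prod,
    MeasureTheory.integral_prod_mul (fun x : ℝ => x ^ i * Real.exp (-x ^ 2))
      (fun y : ℝ => y ^ (2 * (k - j)) * Real.exp (-y ^ 2))]

/-- The Laguerre polynomial `L_k(x) = ∑_{m=0}^k (1/m!) C(k,m) (-x)^m`. -/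
noncomputable def Lag (k : ℕ) (x : ℝ) : ℝ :=
  ∑ m ∈ Finset.range (k + 1), (1 / (m.factorial : ℝ)) * (k.choose m : ℝ) * (-x) ^ m

/-- `(1/(π k!)) ∬ ((x₁ + γ)² + x₂²)^k e^{-x₁²-x₂²} dx₁ dx₂ = L_k(-γ²)`. -/
theorem fock_integral_eq_laguerre (γ : ℝ) (k : ℕ) :
    (1 / (Real.pi * (k.factorial : ℝ))) *
      (∫ p : ℝ × ℝ, ((p.1 + γ) ^ 2 + p.2 ^ 2) ^ k * Real.exp (-p.1 ^ 2 - p.2 ^ 2)) =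
      Lag k (-γ ^ 2) := by
  rw [integral_eval γ k]
  have hπ : Real.sqrt Real.pi * Real.sqrt Real.pi = Real.pi :=
    Real.mul_self_sqrt Real.pi_pos.le
  have hstep : ∀ j ∈ Finset.range (k + 1),
      (∑ i ∈ Finset.range (2 * j + 1),
        (k.choose j : ℝ) * ((2 * j).choose i : ℝ) * γ ^ (2 * j - i) *
          ((∫ x : ℝ, x ^ i * Real.exp (-x ^ 2)) *
            ∫ y : ℝ, y ^ (2 * (k - j)) * Real.exp (-y ^ 2)))
      = ∑ l ∈ Finset.range (j + 1),
          Real.pi * ((k.choose j : ℝ) * ((2 * j).choose (2 * l) : ℝ) * γ ^ (2 * j - 2 * l) *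
            (aR l * aR (k - j))) := by
    intro j _
    rw [sum_even (fun i => (k.choose j : ℝ) * ((2 * j).choose i : ℝ) * γ ^ (2 * j - i) *
        ((∫ x : ℝ, x ^ i * Real.exp (-x ^ 2)) *
          ∫ y : ℝ, y ^ (2 * (k - j)) * Real.exp (-y ^ 2)))
      (fun m => by beta_reduce; rw [momOdd m]; ring) j]
    apply Finset.sum_congr rfl
    intro l _
    beta_reduce
    rw [momEven l, momEven (k - j)]
    linear_combination ((k.choose j : ℝ) * ((2 * j).choose (2 * l) : ℝ) * γ ^ (2 * j - 2 * l)
      * aR l * aR (k - j)) * hπ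
  rw [Finset.sum_congr rfl hstep]
  simp_rw [← Finset.mul_sum]
  rw [comb_bridge γ k]
  have hLag : Lag k (-γ ^ 2) = ∑ m ∈ Finset.range (k + 1),
      (1 / (m.factorial : ℝ)) * (k.choose m : ℝ) * γ ^ (2 * m) := by
    unfold Lag
    apply Finset.sum_congr rfl
    intro m _
    rw [neg_neg, ← pow_mul, mul_comm 2 m]
  rw [hLag]
  have hπ0 : Real.pi ≠ 0 := Real.pi_ne_zero
  have hk0 : ((k.factorial : ℝ)) ≠ 0 := Nat.cast_ne_zero.mpr (Nat.factorial_ne_zero _)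
  field_simp
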